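/- arXiv:2312.05573 — 2 statements merged into one kernel-verified Lean document; each statement's English description precedes it below -/
import Mathlib

section
/- For all real numbers α, β, parameter γ ∈ [0,1), and all t ∈ [0,1], the quantity |α − βt| / √(1 + t² − 2γt) is at most √3 · max(|α|, |β|, |β−α|/√(2(1−γ))). -/
set_option maxHeartbeats 1000000


theorem stmt_0 (α β γ t : ℝ) (hγ0 : 0 ≤ γ) (hγ1 : γ < 1)
    (ht0 : 0 ≤ t) (ht1 : t ≤ 1) :
    |α - β * t| / Real.sqrt (1 + t ^ 2 - 2 * γ * t) ≤
      Real.sqrt 3 * max (max |α| |β|) (|β - α| / Real.sqrt (2 * (1 - γ))) := by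
  set M := max (max |α| |β|) (|β - α| / Real.sqrt (2 * (1 - γ))) with hMdef
  clear_value M
  have h2γ : (0:ℝ) < 2 * (1 - γ) := by linarith
  have hs : (0:ℝ) < Real.sqrt (2 * (1 - γ)) := Real.sqrt_pos.mpr h2γ
  have ha : |α| ≤ M := by rw [hMdef]; exact le_max_of_le_left (le_max_left _ _)
  have hM0 : 0 ≤ M := le_trans (abs_nonneg α) ha
  have hc : |β - α| ≤ M * Real.sqrt (2 * (1 - γ)) := by
    have h : |β - α| / Real.sqrt (2 * (1 - γ)) ≤ M := by
      rw [hMdef]; exact le_max_right _ _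
    calc |β - α| = (|β - α| / Real.sqrt (2 * (1 - γ))) * Real.sqrt (2 * (1 - γ)) :=
          (div_mul_cancel₀ _ hs.ne').symm
      _ ≤ M * Real.sqrt (2 * (1 - γ)) := mul_le_mul_of_nonneg_right h hs.le
  have hc2 : |β - α| ^ 2 ≤ M ^ 2 * (2 * (1 - γ)) := by
    have h := mul_self_le_mul_self (abs_nonneg _) hc
    have hss : Real.sqrt (2 * (1 - γ)) * Real.sqrt (2 * (1 - γ)) = 2 * (1 - γ) :=
      Real.mul_self_sqrt h2γ.le
    nlinarith [h, hss]
  have hD : (0:ℝ) < 1 + t ^ 2 - 2 * γ * t := by nlinarith [sq_nonneg (1 - t), mul_nonneg ht0 (le_of_lt (by linarith : (0:ℝ) < 1 - γ))]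
  have habs : |α - β * t| ≤ |α| * (1 - t) + |β - α| * t := by
    have h1 : α - β * t = α * (1 - t) + (α - β) * t := by ring
    calc |α - β * t| = |α * (1 - t) + (α - β) * t| := by rw [h1]
      _ ≤ |α * (1 - t)| + |(α - β) * t| := abs_add_le _ _
      _ = |α| * (1 - t) + |β - α| * t := by
          rw [abs_mul, abs_mul, abs_of_nonneg (by linarith : (0:ℝ) ≤ 1 - t),
            abs_of_nonneg ht0, abs_sub_comm α β]
  have key : (|α| * (1 - t) + |β - α| * t) ^ 2 ≤ 3 * M ^ 2 * (1 + t ^ 2 - 2 * γ * t) := by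
    have ha2 : |α| ^ 2 ≤ M ^ 2 := by nlinarith [mul_self_le_mul_self (abs_nonneg α) ha]
    have htt : t ^ 2 ≤ t := by nlinarith [mul_nonneg ht0 (by linarith : (0:ℝ) ≤ 1 - t)]
    have hK : (0:ℝ) ≤ 2 * (1 - γ) := h2γ.le
    have hcs : 2 * (1 - γ) * (|α| * (1 - t) + |β - α| * t) ^ 2 ≤
        (|α| ^ 2 * (2 * (1 - γ)) + |β - α| ^ 2) * ((1 - t) ^ 2 + 2 * (1 - γ) * t ^ 2) := by
      nlinarith [sq_nonneg (2 * (1 - γ) * |α| * t - |β - α| * (1 - t))]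
    have hb : (|α| ^ 2 * (2 * (1 - γ)) + |β - α| ^ 2) * ((1 - t) ^ 2 + 2 * (1 - γ) * t ^ 2) ≤
        2 * (2 * (1 - γ)) * M ^ 2 * ((1 - t) ^ 2 + 2 * (1 - γ) * t) := by
      have h5 : (0:ℝ) ≤ (1 - t) ^ 2 + 2 * (1 - γ) * t ^ 2 := by positivity
      have h6 : |α| ^ 2 * (2 * (1 - γ)) + |β - α| ^ 2 ≤ 2 * (2 * (1 - γ)) * M ^ 2 := by
        nlinarith
      have h7 : (1 - t) ^ 2 + 2 * (1 - γ) * t ^ 2 ≤ (1 - t) ^ 2 + 2 * (1 - γ) * t := by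
        nlinarith
      have h8 : (0:ℝ) ≤ 2 * (2 * (1 - γ)) * M ^ 2 := by positivity
      calc (|α| ^ 2 * (2 * (1 - γ)) + |β - α| ^ 2) * ((1 - t) ^ 2 + 2 * (1 - γ) * t ^ 2)
          ≤ 2 * (2 * (1 - γ)) * M ^ 2 * ((1 - t) ^ 2 + 2 * (1 - γ) * t ^ 2) :=
            mul_le_mul_of_nonneg_right h6 h5
        _ ≤ 2 * (2 * (1 - γ)) * M ^ 2 * ((1 - t) ^ 2 + 2 * (1 - γ) * t) :=
            mul_le_mul_of_nonneg_left h7 h8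
    have h9' : 2 * (1 - γ) * (|α| * (1 - t) + |β - α| * t) ^ 2 ≤
        2 * (1 - γ) * (2 * M ^ 2 * ((1 - t) ^ 2 + 2 * (1 - γ) * t)) := by
      linarith [le_trans hcs hb]
    have h9 := (mul_le_mul_iff_right₀ h2γ).mp h9'
    nlinarith [h9, mul_nonneg (mul_nonneg hM0 hM0) hD.le]
  have key2 : (α - β * t) ^ 2 ≤ 3 * M ^ 2 * (1 + t ^ 2 - 2 * γ * t) := by
    have h0 : 0 ≤ |α| * (1 - t) + |β - α| * t :=
      add_nonneg (mul_nonneg (abs_nonneg _) (by linarith)) (mul_nonneg (abs_nonneg _) ht0)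
    have := mul_self_le_mul_self (abs_nonneg (α - β * t)) habs
    nlinarith [this, sq_abs (α - β * t)]
  rw [div_le_iff₀ (Real.sqrt_pos.mpr hD)]
  have := Real.sqrt_le_sqrt key2
  rw [Real.sqrt_sq_eq_abs] at this
  calc |α - β * t| ≤ Real.sqrt (3 * M ^ 2 * (1 + t ^ 2 - 2 * γ * t)) := this
    _ = Real.sqrt 3 * M * Real.sqrt (1 + t ^ 2 - 2 * γ * t) := by
        rw [Real.sqrt_mul (by positivity), Real.sqrt_mul (by norm_num),
          Real.sqrt_sq hM0]
end

section
/- Let a,b,c,d ∈ ℝ and e,f ∈ [0,1), and define h(u,v) = (a − bu − cv + duv) / (√(1+u²−2eu) · √(1+v²−2fv)). Then for all (u,v) ∈ [0,1]², |h(u,v)| ≤ 3 · max(|a|, |b|, |c|, |d|, |b−a|/√(1−e), |d−c|/√(1−e), |d−b|/√(1−f), |c−a|/√(1−f), |a−b−c+d|/(√(1−e)·√(1−f))). -/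
set_option maxHeartbeats 1000000


theorem stmt_1 (a b c d e f : ℝ) (he0 : 0 ≤ e) (he1 : e < 1)
    (hf0 : 0 ≤ f) (hf1 : f < 1) (u v : ℝ)
    (hu0 : 0 ≤ u) (hu1 : u ≤ 1) (hv0 : 0 ≤ v) (hv1 : v ≤ 1) :
    |(a - b * u - c * v + d * u * v) /
        (Real.sqrt (1 + u ^ 2 - 2 * e * u) * Real.sqrt (1 + v ^ 2 - 2 * f * v))| ≤
      3 * max |a| (max |b| (max |c| (max |d|
        (max (|b - a| / Real.sqrt (1 - e)) (max (|d - c| / Real.sqrt (1 - e))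
        (max (|d - b| / Real.sqrt (1 - f)) (max (|c - a| / Real.sqrt (1 - f))
          (|a - b - c + d| / (Real.sqrt (1 - e) * Real.sqrt (1 - f)))))))))) := by
  set s := Real.sqrt (1 - e) with hs_def
  set t := Real.sqrt (1 - f) with ht_def
  have hse : 0 < 1 - e := by linarith
  have htf : 0 < 1 - f := by linarith
  have hs0 : 0 < s := Real.sqrt_pos.mpr hse
  have ht0 : 0 < t := Real.sqrt_pos.mpr htf
  have hs2 : s ^ 2 = 1 - e := Real.sq_sqrt hse.le
  have ht2 : t ^ 2 = 1 - f := Real.sq_sqrt htf.le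
  set P := 1 + u ^ 2 - 2 * e * u with hP_def
  set Q := 1 + v ^ 2 - 2 * f * v with hQ_def
  have hP : 0 < P := by
    nlinarith [mul_nonneg he0 (sq_nonneg (1 - u)), mul_nonneg hse.le (sq_nonneg u)]
  have hQ : 0 < Q := by
    nlinarith [mul_nonneg hf0 (sq_nonneg (1 - v)), mul_nonneg htf.le (sq_nonneg v)]
  have hsqP : 0 < Real.sqrt P := Real.sqrt_pos.mpr hP
  have hsqQ : 0 < Real.sqrt Q := Real.sqrt_pos.mpr hQ
  have hXnn : 0 ≤ 1 - u + s * u := by nlinarith [mul_nonneg hs0.le hu0]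
  have hYnn : 0 ≤ 1 - v + t * v := by nlinarith [mul_nonneg ht0.le hv0]
  have hsqrt3 : Real.sqrt 3 * Real.sqrt 3 = 3 := Real.mul_self_sqrt (by norm_num)
  have hKu : 1 - u + s * u ≤ Real.sqrt 3 * Real.sqrt P := by
    rw [← Real.sqrt_mul (by norm_num : (0:ℝ) ≤ 3)]
    apply Real.le_sqrt_of_sq_le
    nlinarith [sq_nonneg ((1 - u) - s * u), sq_nonneg (1 - u),
      mul_nonneg (mul_nonneg hu0 (by linarith : (0:ℝ) ≤ 3 - u)) hse.le]
  have hKv : 1 - v + t * v ≤ Real.sqrt 3 * Real.sqrt Q := by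
    rw [← Real.sqrt_mul (by norm_num : (0:ℝ) ≤ 3)]
    apply Real.le_sqrt_of_sq_le
    nlinarith [sq_nonneg ((1 - v) - t * v), sq_nonneg (1 - v),
      mul_nonneg (mul_nonneg hv0 (by linarith : (0:ℝ) ≤ 3 - v)) htf.le]
  set M := max |a| (max |b| (max |c| (max |d|
        (max (|b - a| / s) (max (|d - c| / s)
        (max (|d - b| / t) (max (|c - a| / t)
          (|a - b - c + d| / (s * t))))))))) with hM_def
  have hMa : |a| ≤ M := le_max_left _ _
  have hM0 : 0 ≤ M := le_trans (abs_nonneg a) hMa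
  have hM1 : |b - a| ≤ M * s := by
    rw [← div_le_iff₀ hs0]
    exact le_max_of_le_right <| le_max_of_le_right <| le_max_of_le_right <|
      le_max_of_le_right <| le_max_left _ _
  have hM2 : |c - a| ≤ M * t := by
    rw [← div_le_iff₀ ht0]
    exact le_max_of_le_right <| le_max_of_le_right <| le_max_of_le_right <|
      le_max_of_le_right <| le_max_of_le_right <| le_max_of_le_right <|
      le_max_of_le_right <| le_max_left _ _
  have hM3 : |a - b - c + d| ≤ M * (s * t) := by
    rw [← div_le_iff₀ (mul_pos hs0 ht0)]
    exact le_max_of_le_right <| le_max_of_le_right <| le_max_of_le_right <|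
      le_max_of_le_right <| le_max_of_le_right <| le_max_of_le_right <|
      le_max_of_le_right <| le_max_of_le_right <| le_rfl
  -- weights
  have w1 : (0:ℝ) ≤ (1 - u) * (1 - v) := mul_nonneg (by linarith) (by linarith)
  have w2 : (0:ℝ) ≤ u * (1 - v) := mul_nonneg hu0 (by linarith)
  have w3 : (0:ℝ) ≤ (1 - u) * v := mul_nonneg (by linarith) hv0
  have w4 : (0:ℝ) ≤ u * v := mul_nonneg hu0 hv0
  have hnum : |a - b * u - c * v + d * u * v| ≤ M * ((1 - u + s * u) * (1 - v + t * v)) := by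
    have key : a - b * u - c * v + d * u * v =
        a * ((1 - u) * (1 - v)) + (a - b) * (u * (1 - v)) + (a - c) * ((1 - u) * v)
          + (a - b - c + d) * (u * v) := by ring
    calc |a - b * u - c * v + d * u * v|
        ≤ |a * ((1 - u) * (1 - v))| + |(a - b) * (u * (1 - v))| + |(a - c) * ((1 - u) * v)|
          + |(a - b - c + d) * (u * v)| := by
          rw [key]
          exact le_trans (abs_add_le _ _) (add_le_add (le_trans (abs_add_le _ _)
            (add_le_add (abs_add_le _ _) le_rfl)) le_rfl)
      _ = |a| * ((1 - u) * (1 - v)) + |a - b| * (u * (1 - v)) + |a - c| * ((1 - u) * v)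
          + |a - b - c + d| * (u * v) := by
          have a1 : |1 - u| = 1 - u := abs_of_nonneg (by linarith)
          have a2 : |1 - v| = 1 - v := abs_of_nonneg (by linarith)
          have a3 : |u| = u := abs_of_nonneg hu0
          have a4 : |v| = v := abs_of_nonneg hv0
          simp only [abs_mul, a1, a2, a3, a4]
      _ ≤ M * ((1 - u) * (1 - v)) + M * s * (u * (1 - v)) + M * t * ((1 - u) * v)
          + M * (s * t) * (u * v) := by
          have e1 : |a - b| = |b - a| := abs_sub_comm a b
          have e2 : |a - c| = |c - a| := abs_sub_comm a c
          refine add_le_add (add_le_add (add_le_add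
            (mul_le_mul_of_nonneg_right hMa w1)
            (mul_le_mul_of_nonneg_right (e1 ▸ hM1) w2))
            (mul_le_mul_of_nonneg_right (e2 ▸ hM2) w3))
            (mul_le_mul_of_nonneg_right hM3 w4)
      _ = M * ((1 - u + s * u) * (1 - v + t * v)) := by ring
  rw [abs_div, abs_of_nonneg (mul_nonneg hsqP.le hsqQ.le),
    div_le_iff₀ (mul_pos hsqP hsqQ)]
  calc |a - b * u - c * v + d * u * v| ≤ M * ((1 - u + s * u) * (1 - v + t * v)) := hnum
    _ ≤ M * ((Real.sqrt 3 * Real.sqrt P) * (Real.sqrt 3 * Real.sqrt Q)) := by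
        apply mul_le_mul_of_nonneg_left _ hM0
        exact mul_le_mul hKu hKv hYnn (by positivity)
    _ = 3 * M * (Real.sqrt P * Real.sqrt Q) := by
        rw [show (Real.sqrt 3 * Real.sqrt P) * (Real.sqrt 3 * Real.sqrt Q)
          = (Real.sqrt 3 * Real.sqrt 3) * (Real.sqrt P * Real.sqrt Q) by ring, hsqrt3]
        ring
end
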